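/- Let D be a τ-atomic integral domain with τ symmetric, refinable, and associate preserving. If G_τ(x) is connected for every x ∈ D^#, then G_τ(x) is a finite pseudoclique for every x ∈ D^#, and in particular G̅_τ(x) ≅ K_n for some finite n depending on x. -/

import Mathlib

/-- `a` is a nonzero nonunit, i.e. an element of `D^#`. -/
def NzNonunit {D : Type*} [CommRing D] (a : D) : Prop := a ≠ 0 ∧ ¬ IsUnit a

/-- `l` is the list of factors of a `τ`-factorization of `a`:
`a = λ * l.prod` for a unit `λ`, the factors are nonzero nonunits and pairwise `τ`-related. -/
def TauFact {D : Type*} [CommRing D] (τ : D → D → Prop) (l : List D) (a : D) : Prop :=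
  l ≠ [] ∧ (∀ b ∈ l, NzNonunit b) ∧ l.Pairwise τ ∧ ∃ u : Dˣ, a = (u : D) * l.prod

/-- `b` τ-divides `a`: `b` occurs as a factor in some τ-factorization of `a`. -/
def TauDvd {D : Type*} [CommRing D] (τ : D → D → Prop) (b a : D) : Prop :=
  ∃ l, TauFact τ l a ∧ b ∈ l

/-- `a` is τ-irreducible (a τ-atom): all its τ-factorizations are trivial. -/
def TauIrred {D : Type*} [CommRing D] (τ : D → D → Prop) (a : D) : Prop :=
  NzNonunit a ∧ ∀ l, TauFact τ l a → l.length = 1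

/-- `l` is a τ-atomic factorization of `a`. -/
def TauAtomicFact {D : Type*} [CommRing D] (τ : D → D → Prop) (l : List D) (a : D) : Prop :=
  TauFact τ l a ∧ ∀ b ∈ l, TauIrred τ b

/-- `D` is τ-atomic: every nonzero nonunit has a τ-atomic factorization. -/
def TauAtomic {D : Type*} [CommRing D] (τ : D → D → Prop) : Prop :=
  ∀ a : D, NzNonunit a → ∃ l, TauAtomicFact τ l a

def TauSymm {D : Type*} [CommRing D] (τ : D → D → Prop) : Prop :=
  ∀ a b, τ a b → τ b a

/-- τ is associate preserving. -/
def TauAssocPres {D : Type*} [CommRing D] (τ : D → D → Prop) : Prop :=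
  ∀ a b b' : D, τ a b → Associated b b' → τ a b'

/-- τ is refinable: replacing each factor of a τ-factorization by a
τ-factorization of it again yields a τ-factorization. -/
def TauRefinable {D : Type*} [CommRing D] (τ : D → D → Prop) : Prop :=
  ∀ (a : D) (l : List D) (F : List (List D)),
    TauFact τ l a → List.Forall₂ (fun b m => TauFact τ m b) l F →
    TauFact τ F.flatten a

/-- `a` is a vertex of the τ-irreducible divisor graph `G_τ(x)`. -/
def GVert {D : Type*} [CommRing D] (τ : D → D → Prop) (x a : D) : Prop :=
  TauIrred τ a ∧ TauDvd τ a x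

/-- `a` and `b` are adjacent (distinct, i.e. non-associated, vertices joined by an edge)
in `G_τ(x)`: some τ-factorization of `x` contains associates of both. -/
def GAdj {D : Type*} [CommRing D] (τ : D → D → Prop) (x a b : D) : Prop :=
  GVert τ x a ∧ GVert τ x b ∧ ¬ Associated a b ∧
  ∃ l, TauFact τ l x ∧ (∃ a' ∈ l, Associated a a') ∧ (∃ b' ∈ l, Associated b b')

/-- `G_τ(x)` is connected (vertices are taken up to associates). -/
def GConnected {D : Type*} [CommRing D] (τ : D → D → Prop) (x : D) : Prop :=
  ∀ a b, GVert τ x a → GVert τ x b →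
    Relation.ReflTransGen (fun u v => GAdj τ x u v ∨ Associated u v) a b

/-- The reduced graph `G̅_τ(x)` (loops deleted) is connected; loops do not affect
connectivity, so this is connectivity with respect to the same adjacency relation. -/
def GBarConnected {D : Type*} [CommRing D] (τ : D → D → Prop) (x : D) : Prop :=
  ∀ a b, GVert τ x a → GVert τ x b →
    Relation.ReflTransGen (fun u v => GAdj τ x u v ∨ Associated u v) a b

/-- `G_τ(x)` is a pseudoclique: any two non-associated vertices are adjacent.
(Equivalently, the reduced graph `G̅_τ(x)` is a clique / complete graph.) -/
def GPseudoclique {D : Type*} [CommRing D] (τ : D → D → Prop) (x : D) : Prop :=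
  ∀ a b, GVert τ x a → GVert τ x b → ¬ Associated a b → GAdj τ x a b

/-- `Diam(G_τ(x)) ≤ 1`: any two vertices are equal (associated) or adjacent. -/
def GDiamLeOne {D : Type*} [CommRing D] (τ : D → D → Prop) (x : D) : Prop :=
  ∀ a b, GVert τ x a → GVert τ x b → Associated a b ∨ GAdj τ x a b

/-- `G_τ(x)` has finitely many vertices (up to associates). -/
def GVertFinite {D : Type*} [CommRing D] (τ : D → D → Prop) (x : D) : Prop :=
  ∃ s : Finset D, ∀ a, GVert τ x a → ∃ c ∈ s, Associated a c

/-- The vertex `a` of `G_τ(x)` has finite degree: finitely many adjacent vertices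
up to associates (loops not counted). -/
def GDegFinite {D : Type*} [CommRing D] (τ : D → D → Prop) (x a : D) : Prop :=
  ∃ s : Finset D, ∀ b, GAdj τ x a b → ∃ c ∈ s, Associated b c

/-- The vertex `a` of `G_τ(x)` carries finitely many loops: there is a uniform bound on
the number of occurrences of associates of `a` in τ-atomic factorizations of `x`. -/
def GLoopsFinite {D : Type*} [CommRing D] (τ : D → D → Prop) (x a : D) : Prop :=
  ∃ N : ℕ, ∀ l m : List D, TauAtomicFact τ l x → m.Sublist l →
    (∀ b ∈ m, Associated a b) → m.length ≤ N

/-- `D` satisfies τ-ACCP. -/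
def TauACCP {D : Type*} [CommRing D] (τ : D → D → Prop) : Prop :=
  ∀ a : ℕ → D, (∀ i, TauDvd τ (a (i + 1)) (a i)) →
    ∃ N, ∀ i, N ≤ i → Associated (a i) (a N)

/-- `D` is a τ-UFD. -/
def TauUFD {D : Type*} [CommRing D] (τ : D → D → Prop) : Prop :=
  TauAtomic τ ∧ ∀ (x : D) (l₁ l₂ : List D), TauAtomicFact τ l₁ x → TauAtomicFact τ l₂ x →
    Multiset.Rel Associated (l₁ : Multiset D) (l₂ : Multiset D)

/-- `D` is a τ-FFD: each nonzero nonunit has only finitely many τ-factorizations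
up to rearrangement and associates. -/
def TauFFD {D : Type*} [CommRing D] (τ : D → D → Prop) : Prop :=
  ∀ x : D, NzNonunit x → ∃ S : Finset (Multiset D),
    ∀ l : List D, TauFact τ l x → ∃ m ∈ S, Multiset.Rel Associated (l : Multiset D) m

/-- `D` is a τ-WFFD: each nonzero nonunit has finitely many τ-divisors up to associates. -/
def TauWFFD {D : Type*} [CommRing D] (τ : D → D → Prop) : Prop :=
  ∀ x : D, NzNonunit x → ∃ s : Finset D,
    ∀ b, TauDvd τ b x → ∃ c ∈ s, Associated b c

/-- `D` is a τ-idf domain: each nonzero nonunit has finitely many τ-irreducible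
τ-divisors up to associates. -/
def TauIdf {D : Type*} [CommRing D] (τ : D → D → Prop) : Prop :=
  ∀ x : D, NzNonunit x → ∃ s : Finset D,
    ∀ b, TauIrred τ b → TauDvd τ b x → ∃ c ∈ s, Associated b c


section Aux

variable {D : Type*} [CommRing D] [IsDomain D] {τ : D → D → Prop}

private lemma rel_mem_right {α β : Type*} {r : α → β → Prop} {s : Multiset α} {t : Multiset β}
    (h : Multiset.Rel r s t) {a : α} (ha : a ∈ s) : ∃ b ∈ t, r a b := by
  revert ha
  induction h with
  | zero => intro ha; simp at ha
  | @cons a' b' s' t' hab hst ih =>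
    intro ha
    rcases Multiset.mem_cons.1 ha with rfl | h'
    · exact ⟨b', Multiset.mem_cons_self _ _, hab⟩
    · obtain ⟨b, hb, hrb⟩ := ih h'
      exact ⟨b, Multiset.mem_cons_of_mem hb, hrb⟩

private lemma rel_symm' {α : Type*} {r : α → α → Prop} (hr : ∀ a b, r a b → r b a)
    {s t : Multiset α} (h : Multiset.Rel r s t) : Multiset.Rel r t s := by
  induction h with
  | zero => exact Multiset.Rel.zero
  | cons hab hst ih => exact Multiset.Rel.cons (hr _ _ hab) ih

private lemma nzNonunit_of_assoc {a b : D} (h : NzNonunit a) (hab : Associated a b) :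
    NzNonunit b := by
  obtain ⟨u, rfl⟩ := hab
  exact ⟨mul_ne_zero h.1 u.ne_zero, fun hu => h.2 ((Units.isUnit_mul_units a u).1 hu)⟩

private lemma tauIrred_of_assoc {a b : D} (h : TauIrred τ a) (hab : Associated a b) :
    TauIrred τ b := by
  obtain ⟨u, hu⟩ := hab
  refine ⟨nzNonunit_of_assoc h.1 ⟨u, hu⟩, ?_⟩
  intro l hl
  obtain ⟨hne, hmem, hpw, w, hw⟩ := hl
  refine h.2 l ⟨hne, hmem, hpw, u⁻¹ * w, ?_⟩
  have h1 : a = b * ↑u⁻¹ := by rw [← hu, mul_assoc, Units.mul_inv, mul_one]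
  rw [h1, hw, Units.val_mul]; ring

private lemma nz_of_tauFact {l : List D} {x : D} (h : TauFact τ l x) : NzNonunit x := by
  obtain ⟨hne, hmem, -, u, hu⟩ := h
  constructor
  · rw [hu]
    refine mul_ne_zero u.ne_zero (List.prod_ne_zero ?_)
    intro h0; exact (hmem 0 h0).1 rfl
  · intro hx
    obtain ⟨c, hc⟩ := List.exists_mem_of_ne_nil l hne
    have hprod : IsUnit l.prod := by
      have hd : l.prod ∣ x := Dvd.intro_left _ hu.symm
      exact isUnit_of_dvd_unit hd hx
    exact (hmem c hc).2 (isUnit_of_dvd_unit (List.dvd_prod hc) hprod)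

/-- Refine a τ-factorization into a τ-atomic one, tracking irreducible factors. -/
private lemma exists_atomic_refine (hatomic : TauAtomic τ) (href : TauRefinable τ)
    {l : List D} {x : D} (hl : TauFact τ l x) :
    ∃ r, TauAtomicFact τ r x ∧ ∀ c ∈ l, TauIrred τ c → ∃ c' ∈ r, Associated c' c := by
  classical
  set g : D → List D := fun b => if h : NzNonunit b then (hatomic b h).choose else [b] with hg
  have hfact : ∀ b ∈ l, TauAtomicFact τ (g b) b := by
    intro b hb
    have hb' := hl.2.1 b hb
    simp only [hg, dif_pos hb']
    exact (hatomic b hb').choose_spec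
  have hF : ∀ l' : List D, (∀ b ∈ l', b ∈ l) →
      List.Forall₂ (fun b m => TauFact τ m b) l' (l'.map g) := by
    intro l'
    induction l' with
    | nil => intro _; exact List.Forall₂.nil
    | cons c cs ih =>
      intro hsub
      exact List.Forall₂.cons ((hfact c (hsub c (by simp))).1)
        (ih fun b hb => hsub b (by simp [hb]))
  have hr := href x l (l.map g) hl (hF l fun b hb => hb)
  refine ⟨(l.map g).flatten, ⟨hr, ?_⟩, ?_⟩
  · intro c hc
    rw [List.mem_flatten] at hc
    obtain ⟨m, hm, hcm⟩ := hc
    rw [List.mem_map] at hm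
    obtain ⟨b, hb, rfl⟩ := hm
    exact (hfact b hb).2 c hcm
  · intro c hc hirr
    have h1 : TauAtomicFact τ (g c) c := hfact c hc
    have hlen := hirr.2 (g c) h1.1
    obtain ⟨e, he⟩ := List.length_eq_one_iff.1 hlen
    obtain ⟨-, -, -, w, hw⟩ := h1.1
    refine ⟨e, ?_, ⟨w, ?_⟩⟩
    · rw [List.mem_flatten]
      exact ⟨g c, List.mem_map_of_mem (f := g) hc, by rw [he]; simp⟩
    · rw [hw, he]; simp [mul_comm]

/-- Cancel a common (up to associates) atom from two τ-atomic factorizations. -/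
private lemma cancel_atom {x : D} {p q : List D} {a b : D}
    (hp : TauAtomicFact τ p x) (hq : TauAtomicFact τ q x)
    (ha : a ∈ p) (hb : b ∈ q) (hab : Associated a b)
    (hp2 : 2 ≤ p.length) (hq2 : 2 ≤ q.length) :
    ∃ (y : D) (p₁ q₁ : List D), NzNonunit y ∧ TauAtomicFact τ p₁ y ∧ TauAtomicFact τ q₁ y ∧
      p₁.length + 1 = p.length ∧ q₁.length + 1 = q.length ∧
      (Multiset.Rel Associated (p₁ : Multiset D) (q₁ : Multiset D) → Multiset.Rel Associated (p : Multiset D) (q : Multiset D)) := by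
  obtain ⟨s, t, rfl⟩ := List.append_of_mem ha
  obtain ⟨u, v, rfl⟩ := List.append_of_mem hb
  set p₁ : List D := s ++ t with hp₁def
  set q₁ : List D := u ++ v with hq₁def
  have hlp : p₁.length + 1 = (s ++ a :: t).length := by simp [hp₁def]; omega
  have hlq : q₁.length + 1 = (u ++ b :: v).length := by simp [hq₁def]; omega
  have hp₁ne : p₁ ≠ [] := by
    have hpos : 0 < p₁.length := by omega
    exact List.ne_nil_of_length_pos hpos
  have hq₁ne : q₁ ≠ [] := by
    have hpos : 0 < q₁.length := by omega
    exact List.ne_nil_of_length_pos hpos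
  have hsubp : p₁.Sublist (s ++ a :: t) := (List.append_sublist_append_left s).2 (List.sublist_cons_self a t)
  have hsubq : q₁.Sublist (u ++ b :: v) := (List.append_sublist_append_left u).2 (List.sublist_cons_self b v)
  have hprodp : (s ++ a :: t).prod = a * p₁.prod := by
    rw [(List.perm_middle (a := a) (l₁ := s) (l₂ := t)).prod_eq, List.prod_cons]
  have hprodq : (u ++ b :: v).prod = b * q₁.prod := by
    rw [(List.perm_middle (a := b) (l₁ := u) (l₂ := v)).prod_eq, List.prod_cons]
  obtain ⟨up, hup⟩ := hp.1.2.2.2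
  obtain ⟨uq, huq⟩ := hq.1.2.2.2
  obtain ⟨w, hw⟩ := hab
  have ha0 : a ≠ 0 := (hp.1.2.1 a ha).1
  have key : ↑up * p₁.prod = ↑uq * (↑w * q₁.prod) := by
    apply mul_left_cancel₀ ha0
    have h1 : x = ↑up * (a * p₁.prod) := by rw [hup, hprodp]
    have h2 : x = ↑uq * ((a * ↑w) * q₁.prod) := by rw [huq, hprodq, hw]
    calc a * (↑up * p₁.prod) = ↑up * (a * p₁.prod) := by ring
    _ = ↑uq * ((a * ↑w) * q₁.prod) := by rw [← h1, h2]
    _ = a * (↑uq * (↑w * q₁.prod)) := by ring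
  have key2 : p₁.prod = ↑(up⁻¹ * uq * w) * q₁.prod := by
    have h3 : (↑up⁻¹ : D) * (↑up * p₁.prod) = ↑up⁻¹ * (↑uq * (↑w * q₁.prod)) := by rw [key]
    rw [← mul_assoc, Units.inv_mul, one_mul] at h3
    rw [h3, Units.val_mul, Units.val_mul]
    ring
  have hfp₁ : TauFact τ p₁ p₁.prod :=
    ⟨hp₁ne, fun c hc => hp.1.2.1 c (hsubp.mem hc), hp.1.2.2.1.sublist hsubp, 1, by simp⟩
  have hfq₁ : TauFact τ q₁ p₁.prod :=
    ⟨hq₁ne, fun c hc => hq.1.2.1 c (hsubq.mem hc), hq.1.2.2.1.sublist hsubq,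
      up⁻¹ * uq * w, key2⟩
  refine ⟨p₁.prod, p₁, q₁,
    nz_of_tauFact hfp₁,
    ⟨hfp₁, fun c hc => hp.2 c (hsubp.mem hc)⟩,
    ⟨hfq₁, fun c hc => hq.2 c (hsubq.mem hc)⟩,
    hlp, hlq, ?_⟩
  intro hrel
  have hpm : ((s ++ a :: t : List D) : Multiset D) = a ::ₘ ↑p₁ := by
    have hperm : List.Perm (s ++ a :: t) (a :: p₁) := List.perm_middle
    rw [Multiset.coe_eq_coe.2 hperm, Multiset.cons_coe]
  have hqm : ((u ++ b :: v : List D) : Multiset D) = b ::ₘ ↑q₁ := by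
    have hperm : List.Perm (u ++ b :: v) (b :: q₁) := List.perm_middle
    rw [Multiset.coe_eq_coe.2 hperm, Multiset.cons_coe]
  rw [hpm, hqm]
  exact Multiset.Rel.cons ⟨w, hw⟩ hrel

/-- From a non-associate pair of atomic factorizations produce a "disjoint" one. -/
private lemma disjointify :
    ∀ (n : ℕ) (x : D) (p q : List D), p.length ≤ n →
    TauAtomicFact τ p x → TauAtomicFact τ q x →
    ¬ Multiset.Rel Associated (p : Multiset D) (q : Multiset D) →
    ∃ (y : D) (p' q' : List D), NzNonunit y ∧ TauAtomicFact τ p' y ∧ TauAtomicFact τ q' y ∧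
      ¬ Multiset.Rel Associated (p' : Multiset D) (q' : Multiset D) ∧ (∀ a ∈ p', ∀ b ∈ q', ¬ Associated a b) ∧
      p'.length ≤ p.length := by
  intro n
  induction n with
  | zero =>
    intro x p q hlen hp hq _
    exact absurd (List.length_eq_zero_iff.1 (Nat.le_zero.1 hlen)) hp.1.1
  | succ n ih =>
    intro x p q hlen hp hq hrel
    by_cases hdisj : ∀ a ∈ p, ∀ b ∈ q, ¬ Associated a b
    · exact ⟨x, p, q, nz_of_tauFact hp.1, hp, hq, hrel, hdisj, le_refl _⟩
    push_neg at hdisj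
    obtain ⟨a, ha, b, hb, hab⟩ := hdisj
    have hp2 : 2 ≤ p.length := by
      by_contra h2
      have h1 : p.length = 1 := by
        have := List.length_pos_iff.2 hp.1.1; omega
      obtain ⟨a₀, rfl⟩ := List.length_eq_one_iff.1 h1
      have haa : a = a₀ := by simpa using ha
      subst haa
      obtain ⟨upx, hupx⟩ := hp.1.2.2.2
      have hax : Associated a x := ⟨upx, by rw [hupx]; simp [mul_comm]⟩
      have hxirr : TauIrred τ x := tauIrred_of_assoc (hp.2 a (by simp)) hax
      obtain ⟨b₀, rfl⟩ := List.length_eq_one_iff.1 (hxirr.2 q hq.1)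
      have hbb : b = b₀ := by simpa using hb
      subst hbb
      exact hrel (by simpa using Multiset.Rel.cons hab Multiset.Rel.zero)
    have hq2 : 2 ≤ q.length := by
      by_contra h2
      have h1 : q.length = 1 := by
        have := List.length_pos_iff.2 hq.1.1; omega
      obtain ⟨b₀, rfl⟩ := List.length_eq_one_iff.1 h1
      have hbb : b = b₀ := by simpa using hb
      subst hbb
      obtain ⟨uqx, huqx⟩ := hq.1.2.2.2
      have hbx : Associated b x := ⟨uqx, by rw [huqx]; simp [mul_comm]⟩
      have hxirr : TauIrred τ x := tauIrred_of_assoc (hq.2 b (by simp)) hbx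
      have := hxirr.2 p hp.1
      omega
    obtain ⟨y, p₁, q₁, hy, hp₁, hq₁, hlp₁, hlq₁, himp⟩ :=
      cancel_atom hp hq ha hb hab hp2 hq2
    have hrel₁ : ¬ Multiset.Rel Associated (p₁ : Multiset D) (q₁ : Multiset D) := fun h => hrel (himp h)
    obtain ⟨z, p', q', hz, hp', hq', hrel', hdisj', hlen'⟩ :=
      ih y p₁ q₁ (by omega) hp₁ hq₁ hrel₁
    exact ⟨z, p', q', hz, hp', hq', hrel', hdisj', by omega⟩

/-- A "bad" configuration: a disjoint pair of non-rel-associated atomic factorizations. -/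
private def IsBad (τ : D → D → Prop) (n : ℕ) : Prop :=
  ∃ (x : D) (p q : List D), TauAtomicFact τ p x ∧ TauAtomicFact τ q x ∧
    ¬ Multiset.Rel Associated (p : Multiset D) (q : Multiset D) ∧ (∀ a ∈ p, ∀ b ∈ q, ¬ Associated a b) ∧
    p.length = n

private lemma uniqueness (href : TauRefinable τ) (hatomic : TauAtomic τ)
    (hconn : ∀ x : D, NzNonunit x → GConnected τ x) :
    ∀ (x : D) (p q : List D), TauAtomicFact τ p x → TauAtomicFact τ q x →
      Multiset.Rel Associated (p : Multiset D) (q : Multiset D) := by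
  classical
  by_contra h
  push_neg at h
  obtain ⟨x₀, p₀, q₀, hp₀, hq₀, hrel₀⟩ := h
  obtain ⟨y₀, p₀', q₀', hy₀, hp₀', hq₀', hrel₀', hdisj₀', -⟩ :=
    disjointify p₀.length x₀ p₀ q₀ le_rfl hp₀ hq₀ hrel₀
  have hbad : ∃ n, IsBad τ n := ⟨p₀'.length, y₀, p₀', q₀', hp₀', hq₀', hrel₀', hdisj₀', rfl⟩
  obtain ⟨x, p, q, hp, hq, hrel, hdisj, hplen⟩ := Nat.find_spec hbad
  have hx : NzNonunit x := nz_of_tauFact hp.1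
  have hp2 : 2 ≤ p.length := by
    by_contra h2
    have h1 : p.length = 1 := by
      have := List.length_pos_iff.2 hp.1.1; omega
    obtain ⟨a₀, hpa⟩ := List.length_eq_one_iff.1 h1
    obtain ⟨upx, hupx⟩ := hp.1.2.2.2
    have hax : Associated a₀ x := ⟨upx, by rw [hupx, hpa]; simp [mul_comm]⟩
    have hxirr : TauIrred τ x := tauIrred_of_assoc (hp.2 a₀ (by simp [hpa])) hax
    obtain ⟨b₀, hqb⟩ := List.length_eq_one_iff.1 (hxirr.2 q hq.1)
    obtain ⟨uqx, huqx⟩ := hq.1.2.2.2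
    have hbx : Associated b₀ x := ⟨uqx, by rw [huqx, hqb]; simp [mul_comm]⟩
    exact hdisj a₀ (by simp [hpa]) b₀ (by simp [hqb]) (hax.trans hbx.symm)
  set a : D := p.head hp.1.1 with hadef
  set b : D := q.head hq.1.1 with hbdef
  have hamem : a ∈ p := List.head_mem _
  have hbmem : b ∈ q := List.head_mem _
  have va : GVert τ x a := ⟨hp.2 a hamem, ⟨p, hp.1, hamem⟩⟩
  have vb : GVert τ x b := ⟨hq.2 b hbmem, ⟨q, hq.1, hbmem⟩⟩
  have hchain := hconn x hx a b va vb
  have inv : ∀ c : D,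
      Relation.ReflTransGen (fun u v => GAdj τ x u v ∨ Associated u v) a c →
      ∃ a' ∈ p, Associated c a' := by
    intro c hc
    induction hc with
    | refl => exact ⟨a, hamem, Associated.refl a⟩
    | @tail m c hrtg hstep ih =>
      obtain ⟨a', ha', hma'⟩ := ih
      rcases hstep with hadj | hassoc
      · obtain ⟨vm, vc, -, l, hl, ⟨m', hm'l, hmm'⟩, ⟨c', hc'l, hcc'⟩⟩ := hadj
        obtain ⟨r, hr, htrack⟩ := exists_atomic_refine hatomic href hl
        obtain ⟨m'', hm''r, hm''m'⟩ := htrack m' hm'l (tauIrred_of_assoc vm.1 hmm')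
        obtain ⟨c'', hc''r, hc''c'⟩ := htrack c' hc'l (tauIrred_of_assoc vc.1 hcc')
        have ha'm'' : Associated a' m'' :=
          (hma'.symm.trans hmm').trans hm''m'.symm
        have hrelpr : Multiset.Rel Associated (p : Multiset D) (r : Multiset D) := by
          by_contra hnr
          have hr2 : 2 ≤ r.length := by
            by_contra hx2
            have h1 : r.length = 1 := by
              have := List.length_pos_iff.2 hr.1.1; omega
            obtain ⟨e, hre⟩ := List.length_eq_one_iff.1 h1
            obtain ⟨ur, hur⟩ := hr.1.2.2.2
            have hex : Associated e x := ⟨ur, by rw [hur, hre]; simp [mul_comm]⟩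
            have hxirr : TauIrred τ x := tauIrred_of_assoc (hr.2 e (by simp [hre])) hex
            have := hxirr.2 p hp.1
            omega
          obtain ⟨y₁, p₁, r₁, hy₁, hp₁, hr₁, hlp₁, hlr₁, himp⟩ :=
            cancel_atom hp hr ha' hm''r ha'm'' hp2 hr2
          have hrel₁ : ¬ Multiset.Rel Associated (p₁ : Multiset D) (r₁ : Multiset D) := fun hh => hnr (himp hh)
          obtain ⟨z, p₂, r₂, hz, hp₂, hr₂, hrel₂, hdisj₂, hlen₂⟩ :=
            disjointify p₁.length y₁ p₁ r₁ le_rfl hp₁ hr₁ hrel₁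
          have hbad₂ : IsBad τ p₂.length := ⟨z, p₂, r₂, hp₂, hr₂, hrel₂, hdisj₂, rfl⟩
          have hlt : p₂.length < Nat.find hbad := by omega
          exact Nat.find_min hbad hlt hbad₂
        obtain ⟨a'', ha''r, hca''⟩ :=
          rel_mem_right (rel_symm' (fun _ _ hh => hh.symm) hrelpr) (Multiset.mem_coe.2 hc''r)
        exact ⟨a'', Multiset.mem_coe.1 ha''r, (hcc'.trans hc''c'.symm).trans hca''⟩
      · exact ⟨a', ha', hassoc.symm.trans hma'⟩
  obtain ⟨a', ha', hba'⟩ := inv b hchain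
  exact hdisj a' ha' b hbmem hba'.symm

end Aux


theorem stmt14 {D : Type*} [CommRing D] [IsDomain D] (τ : D → D → Prop)
    (hsym : TauSymm τ) (href : TauRefinable τ) (hap : TauAssocPres τ)
    (hatomic : TauAtomic τ)
    (hconn : ∀ x : D, NzNonunit x → GConnected τ x) :
    ∀ x : D, NzNonunit x → GPseudoclique τ x ∧ GVertFinite τ x := by
    classical
  intro x hx
  obtain ⟨l₀, hl₀⟩ := hatomic x hx
  have huniq := uniqueness href hatomic hconn
  have hvert : ∀ a : D, GVert τ x a → ∃ c ∈ l₀, Associated a c := by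
    rintro a ⟨hairr, l, hl, hal⟩
    obtain ⟨r, hr, htrack⟩ := exists_atomic_refine hatomic href hl
    obtain ⟨a', ha'r, ha'a⟩ := htrack a hal hairr
    have hrel := huniq x r l₀ hr hl₀
    obtain ⟨c, hc, ha'c⟩ := rel_mem_right hrel (Multiset.mem_coe.2 ha'r)
    exact ⟨c, Multiset.mem_coe.1 hc, ha'a.symm.trans ha'c⟩
  constructor
  · intro a b va vb hnab
    obtain ⟨c, hc, hac⟩ := hvert a va
    obtain ⟨d, hd, hbd⟩ := hvert b vb
    exact ⟨va, vb, hnab, l₀, hl₀.1, ⟨c, hc, hac⟩, ⟨d, hd, hbd⟩⟩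
  · refine ⟨l₀.toFinset, fun a ha => ?_⟩
    obtain ⟨c, hc, hac⟩ := hvert a ha
    exact ⟨c, List.mem_toFinset.2 hc, hac⟩
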